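/- Let ε be a circuit error with outcome m, let ε̂ be a minimum weight circuit error with outcome m, and let ω = ε + ε̂ with cluster decomposition ω = ∑_i ω_i. Let ε_i = ε ∩ V(ω_i) and ε̂_i = ε̂ ∩ V(ω_i). Then for every cluster i, |ε_i| ≥ |ε̂_i|. -/

import Mathlib

/-- Vertices of the sequential Tanner graph: data nodes `v_{i,j}` for
`0 ≤ i ≤ nM`, `1 ≤ j ≤ nD` and outcome nodes `u_i` for the `nM` measurements. -/
abbrev Vtx (nM nD : ℕ) := (Fin (nM + 1) × Fin nD) ⊕ Fin nM

/-- A circuit error: input error `e 0`, internal errors `e 1, …, e nM`, and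
measurement error `f`. -/
structure CircErr (nM nD : ℕ) where
  e : Fin (nM + 1) → Fin nD → ZMod 2
  f : Fin nM → ZMod 2

/-- The accumulated data error `ē^i = ∑_{k ≤ i} e^k`. -/
def acc {nM nD : ℕ} (ε : CircErr nM nD) (i : Fin (nM + 1)) (j : Fin nD) : ZMod 2 :=
  ∑ k : Fin (nM + 1), if (k : ℕ) ≤ (i : ℕ) then ε.e k j else 0

/-- The measurement outcome: the `i`-th (0-indexed) outcome bit is the parity
of the accumulated error `ē^i` on the support of row `i` of `H`, plus `f i`. -/
def outcomeErr {nM nD : ℕ} (H : Fin nM → Fin nD → ZMod 2) (ε : CircErr nM nD) :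
    Fin nM → ZMod 2 := fun i =>
  (∑ j, H i j * acc ε i.castSucc j) + ε.f i

/-- Residual data error `π(ε) = ∑_i e^i = ē^{nM}`. -/
def residualErr {nM nD : ℕ} (ε : CircErr nM nD) : Fin nD → ZMod 2 :=
  fun j => ∑ k, ε.e k j

/-- Hamming weight of a circuit error. -/
def wtErr {nM nD : ℕ} (ε : CircErr nM nD) : ℕ :=
  (∑ i, hammingNorm (ε.e i)) + hammingNorm ε.f

/-- Adjacency in the sequential Tanner graph: (i) consecutive data nodes in
the same column; (ii) two data nodes of row `i` both involved in measurement
`i`; (iii) a data node of row `i` involved in measurement `i` and the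
outcome node `u_i`. -/
def Adj {nM nD : ℕ} (H : Fin nM → Fin nD → ZMod 2) :
    Vtx nM nD → Vtx nM nD → Prop
  | Sum.inl (i, j), Sum.inl (i', j') =>
      (j = j' ∧ ((i : ℕ) + 1 = (i' : ℕ) ∨ (i' : ℕ) + 1 = (i : ℕ))) ∨
      (∃ k : Fin nM, (i : ℕ) = (k : ℕ) ∧ (i' : ℕ) = (k : ℕ) ∧
        H k j = 1 ∧ H k j' = 1)
  | Sum.inl (i, j), Sum.inr k => (i : ℕ) = (k : ℕ) ∧ H k j = 1
  | Sum.inr k, Sum.inl (i, j) => (i : ℕ) = (k : ℕ) ∧ H k j = 1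
  | Sum.inr _, Sum.inr _ => False

/-- Support of the accumulated error `ε̄` in the sequential Tanner graph. -/
def accSupp {nM nD : ℕ} (ε : CircErr nM nD) : Set (Vtx nM nD) :=
  fun v => v.elim (fun p => acc ε p.1 p.2 ≠ 0) (fun k => ε.f k ≠ 0)

/-- One step of a path inside the support of the accumulated error. -/
def Step {nM nD : ℕ} (H : Fin nM → Fin nD → ZMod 2) (ε : CircErr nM nD)
    (u v : Vtx nM nD) : Prop :=
  u ∈ accSupp ε ∧ v ∈ accSupp ε ∧ Adj H u v

/-- The connected component (cluster) of the vertex `v0` inside the support of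
the accumulated error of `ε`. -/
def cluster {nM nD : ℕ} (H : Fin nM → Fin nD → ZMod 2) (ε : CircErr nM nD)
    (v0 : Vtx nM nD) : Set (Vtx nM nD) :=
  fun u => u ∈ accSupp ε ∧ Relation.ReflTransGen (Step H ε) v0 u

instance {nM nD : ℕ} : Add (CircErr nM nD) :=
  ⟨fun a b => ⟨a.e + b.e, a.f + b.f⟩⟩

/-- Given the connected component `U` of the accumulated error of a circuit
error `ω`, this is the vertex support `V(ω_i)` of the corresponding cluster
`ω_i` of the cluster decomposition of `ω`: the de-accumulation of the
restriction to `U` of the accumulated error is nonzero on a data node `(i,j)`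
exactly when one of `(i,j)`, `(i-1,j)` belongs to `U` and not both; the
outcome flips of the cluster are those in `U`. -/
def clusterVset {nM nD : ℕ} (U : Set (Vtx nM nD)) : Set (Vtx nM nD) :=
  fun v => v.elim
    (fun p => Xor' (Sum.inl p ∈ U)
      (∃ _ : 0 < (p.1 : ℕ),
        Sum.inl ((⟨(p.1 : ℕ) - 1, by have := p.1.isLt; omega⟩ :
          Fin (nM + 1)), p.2) ∈ U))
    (fun k => Sum.inr k ∈ U)

/-- The weight of the restriction `ε ∩ A` of a circuit error to a vertex set:
the number of support vertices of `ε` lying in `A`. -/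
noncomputable def wtOn {nM nD : ℕ} (ε : CircErr nM nD) (A : Set (Vtx nM nD)) : ℕ :=
  Nat.card {v : Vtx nM nD //
    v ∈ A ∧ v.elim (fun p => ε.e p.1 p.2 ≠ 0) (fun k => ε.f k ≠ 0)}


/-! ### Auxiliary lemmas -/

section Aux

variable {nM nD : ℕ}

lemma zmod2_eq_one {x : ZMod 2} (h : x ≠ 0) : x = 1 := by
  revert h; revert x; decide

lemma add_e' (a b : CircErr nM nD) : (a + b).e = a.e + b.e := rfl
lemma add_f' (a b : CircErr nM nD) : (a + b).f = a.f + b.f := rfl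

lemma acc_add (a b : CircErr nM nD) (i : Fin (nM + 1)) (j : Fin nD) :
    acc (a + b) i j = acc a i j + acc b i j := by
  unfold acc
  rw [← Finset.sum_add_distrib]
  refine Finset.sum_congr rfl fun k _ => ?_
  simp only [add_e', Pi.add_apply]
  split <;> simp

lemma outcome_add (H : Fin nM → Fin nD → ZMod 2) (a b : CircErr nM nD) (i : Fin nM) :
    outcomeErr H (a + b) i = outcomeErr H a i + outcomeErr H b i := by
  unfold outcomeErr
  simp only [acc_add, add_f', Pi.add_apply, mul_add, Finset.sum_add_distrib]
  ring

lemma acc_eq_range (ε : CircErr nM nD) (i : Fin (nM + 1)) (j : Fin nD) :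
    acc ε i j = ∑ k ∈ Finset.range ((i : ℕ) + 1),
      (if h : k < nM + 1 then ε.e ⟨k, h⟩ j else 0) := by
  have h1 : acc ε i j = ∑ k ∈ Finset.range (nM + 1),
      (if k ≤ (i : ℕ) then (if h : k < nM + 1 then ε.e ⟨k, h⟩ j else 0) else 0) := by
    rw [acc, ← Fin.sum_univ_eq_sum_range
      (fun k => if k ≤ (i : ℕ) then (if h : k < nM + 1 then ε.e ⟨k, h⟩ j else 0) else 0)]
    refine Finset.sum_congr rfl fun k _ => ?_
    simp [k.isLt]
  rw [h1, ← Finset.sum_filter]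
  congr 1
  ext k
  simp only [Finset.mem_filter, Finset.mem_range]
  have := i.isLt
  omega

lemma telescope (g : ℕ → ZMod 2) (n : ℕ) :
    ∑ k ∈ Finset.range (n + 1), (g k + if 0 < k then g (k - 1) else 0) = g n := by
  induction n with
  | zero => simp
  | succ n ih =>
    rw [Finset.sum_range_succ, ih]
    have h2 : ∀ x y : ZMod 2, x + (y + x) = y := by decide
    simpa using h2 (g n) (g (n + 1))

open Classical in
lemma xor_ind (a b : Prop) :
    (if Xor' a b then (1 : ZMod 2) else 0) = (if a then 1 else 0) + (if b then 1 else 0) := by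
  classical
  by_cases ha : a <;> by_cases hb : b <;> simp [Xor', ha, hb] <;> decide

open Classical in
/-- The cluster `ω_i` as a circuit error supported on `clusterVset U`. -/
noncomputable def restErr (U : Set (Vtx nM nD)) : CircErr nM nD where
  e := fun i j => if Sum.inl (i, j) ∈ clusterVset U then 1 else 0
  f := fun k => if Sum.inr k ∈ U then 1 else 0

open Classical in
lemma acc_restErr (U : Set (Vtx nM nD)) (i : Fin (nM + 1)) (j : Fin nD) :
    acc (restErr U) i j = if Sum.inl (i, j) ∈ U then 1 else 0 := by
  classical
  set χ : ℕ → ZMod 2 := fun k => if h : k < nM + 1 then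
      (if Sum.inl ((⟨k, h⟩ : Fin (nM + 1)), j) ∈ U then 1 else 0) else 0 with hχ
  have key : ∀ k, k < nM + 1 →
      (if h : k < nM + 1 then (restErr U).e ⟨k, h⟩ j else 0)
        = χ k + (if 0 < k then χ (k - 1) else 0) := by
    intro k h
    rw [dif_pos h]
    show (if Sum.inl ((⟨k, h⟩ : Fin (nM + 1)), j) ∈ clusterVset U then (1 : ZMod 2) else 0) = _
    have hcl : (Sum.inl ((⟨k, h⟩ : Fin (nM + 1)), j) ∈ clusterVset U) =
        Xor' (Sum.inl ((⟨k, h⟩ : Fin (nM + 1)), j) ∈ U)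
          (∃ _ : 0 < k, Sum.inl ((⟨k - 1, by omega⟩ : Fin (nM + 1)), j) ∈ U) := rfl
    rw [hcl]
    rcases Nat.eq_zero_or_pos k with h0 | h0
    · subst h0
      simp [Xor', Xor, hχ, h, Nat.lt_succ_iff.mp h]
      congr
    · have h1 : k - 1 < nM + 1 := by omega
      have hps : (0 < k) = True := eq_true h0
      by_cases hu : Sum.inl ((⟨k, h⟩ : Fin (nM + 1)), j) ∈ U <;>
        by_cases hv : Sum.inl ((⟨k - 1, h1⟩ : Fin (nM + 1)), j) ∈ U <;>
          simp [Xor', hu, hv, h0, hχ, h, h1, exists_prop, hps, Nat.lt_succ_iff.mp h,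
            (by omega : k ≤ nM + 1)] <;> decide
  rw [acc_eq_range, Finset.sum_congr rfl
    (fun k hk => key k (by have := Finset.mem_range.1 hk; have := i.isLt; omega)),
    telescope χ (i : ℕ)]
  simp [hχ, i.isLt, Fin.eta, Nat.lt_succ_iff.mp i.isLt]

lemma e_add_acc (ε : CircErr nM nD) (i : Fin (nM + 1)) (j : Fin nD) :
    ε.e i j = acc ε i j +
      (if h : 0 < (i : ℕ) then acc ε ⟨(i : ℕ) - 1, by have := i.isLt; omega⟩ j else 0) := by
  have hchar : ∀ x y : ZMod 2, x = (y + x) + y := by decide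
  by_cases h0 : 0 < (i : ℕ)
  · rw [dif_pos h0, acc_eq_range, acc_eq_range]
    have hr : ((⟨(i : ℕ) - 1, by have := i.isLt; omega⟩ : Fin (nM + 1)) : ℕ) + 1 = (i : ℕ) := by
      simp; omega
    rw [hr]
    rw [show (i : ℕ) + 1 = (i : ℕ) + 1 from rfl, Finset.sum_range_succ]
    have : (if h : (i : ℕ) < nM + 1 then ε.e ⟨(i : ℕ), h⟩ j else 0) = ε.e i j := by
      simp [i.isLt]
    rw [this]
    exact hchar _ _
  · rw [dif_neg h0, add_zero, acc_eq_range]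
    have hi : (i : ℕ) = 0 := by omega
    rw [hi]
    simp only [Finset.range_one, Finset.sum_singleton, zero_add]
    rw [dif_pos (by omega : 0 < nM + 1)]
    congr 1
    exact Fin.ext (by simpa using hi)

end Aux

section Aux2

variable {nM nD : ℕ}

lemma outcome_restErr_zero (H : Fin nM → Fin nD → ZMod 2) (ω : CircErr nM nD)
    (U : Set (Vtx nM nD))
    (hsub : ∀ v ∈ U, v ∈ accSupp ω)
    (hclosed : ∀ u v, u ∈ U → Step H ω u v → v ∈ U)
    (hωout : outcomeErr H ω = 0) :
    outcomeErr H (restErr U) = 0 := by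
  classical
  funext i
  have hωi : (∑ j, H i j * acc ω i.castSucc j) + ω.f i = 0 := congrFun hωout i
  show (∑ j, H i j * acc (restErr U) i.castSucc j) + (restErr U).f i = 0
  simp only [acc_restErr]
  have hfdef : (restErr U).f i = if Sum.inr i ∈ U then 1 else 0 := by
    simp [restErr]
  by_cases hu : Sum.inr i ∈ U
  · -- Case A : the outcome node is in the cluster
    have hfsupp : ω.f i ≠ 0 := hsub _ hu
    have hf : ω.f i = 1 := zmod2_eq_one hfsupp
    have hsum : ∀ j, H i j * (if Sum.inl (i.castSucc, j) ∈ U then (1 : ZMod 2) else 0)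
        = H i j * acc ω i.castSucc j := by
      intro j
      by_cases hH : H i j = 0
      · simp [hH]
      · have hH1 : H i j = 1 := zmod2_eq_one hH
        congr 1
        by_cases hin : Sum.inl (i.castSucc, j) ∈ U
        · rw [if_pos hin]
          exact (zmod2_eq_one (hsub _ hin)).symm
        · rw [if_neg hin]
          by_contra hacc
          have hacc' : acc ω i.castSucc j ≠ 0 := fun h => hacc h.symm
          exact hin (hclosed _ _ hu ⟨hfsupp, hacc', Fin.coe_castSucc i, hH1⟩)
    rw [Finset.sum_congr rfl fun j _ => hsum j, hfdef, if_pos hu, ← hf]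
    exact hωi
  · rw [hfdef, if_neg hu, add_zero]
    by_cases hex : ∃ j0, H i j0 = 1 ∧ Sum.inl (i.castSucc, j0) ∈ U
    · obtain ⟨j0, hH0, hj0⟩ := hex
      have hj0supp : acc ω i.castSucc j0 ≠ 0 := hsub _ hj0
      have hf : ω.f i = 0 := by
        by_contra hf
        exact hu (hclosed _ _ hj0 ⟨hj0supp, hf, Fin.coe_castSucc i, hH0⟩)
      have hsum : ∀ j, H i j * (if Sum.inl (i.castSucc, j) ∈ U then (1 : ZMod 2) else 0)
          = H i j * acc ω i.castSucc j := by
        intro j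
        by_cases hH : H i j = 0
        · simp [hH]
        · have hH1 : H i j = 1 := zmod2_eq_one hH
          congr 1
          by_cases hin : Sum.inl (i.castSucc, j) ∈ U
          · rw [if_pos hin]
            exact (zmod2_eq_one (hsub _ hin)).symm
          · rw [if_neg hin]
            by_contra hacc
            have hacc' : acc ω i.castSucc j ≠ 0 := fun h => hacc h.symm
            refine hin (hclosed _ _ hj0 ⟨hj0supp, hacc', Or.inr ⟨i, ?_, ?_, hH0, hH1⟩⟩)
            · exact Fin.coe_castSucc i
            · exact Fin.coe_castSucc i
      rw [Finset.sum_congr rfl fun j _ => hsum j]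
      rw [hf, add_zero] at hωi
      exact hωi
    · push_neg at hex
      have hsum : ∀ j, H i j * (if Sum.inl (i.castSucc, j) ∈ U then (1 : ZMod 2) else 0) = 0 := by
        intro j
        by_cases hH : H i j = 0
        · simp [hH]
        · have hH1 : H i j = 1 := zmod2_eq_one hH
          rw [if_neg (hex j hH1), mul_zero]
      rw [Finset.sum_congr rfl fun j _ => hsum j]
      simp

lemma clusterVset_e_one (H : Fin nM → Fin nD → ZMod 2) (ω : CircErr nM nD)
    (U : Set (Vtx nM nD))
    (hsub : ∀ v ∈ U, v ∈ accSupp ω)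
    (hclosed : ∀ u v, u ∈ U → Step H ω u v → v ∈ U)
    (i : Fin (nM + 1)) (j : Fin nD)
    (hmem : Sum.inl (i, j) ∈ clusterVset U) :
    ω.e i j = 1 := by
  classical
  have hx : Xor' (Sum.inl (i, j) ∈ U)
      (∃ _ : 0 < (i : ℕ),
        Sum.inl ((⟨(i : ℕ) - 1, by have := i.isLt; omega⟩ : Fin (nM + 1)), j) ∈ U) := hmem
  rw [e_add_acc]
  rcases hx with ⟨ha, hb⟩ | ⟨hb, ha⟩
  · have h1 : acc ω i j = 1 := zmod2_eq_one (hsub _ ha)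
    by_cases h0 : 0 < (i : ℕ)
    · have hnot : Sum.inl ((⟨(i : ℕ) - 1, by have := i.isLt; omega⟩ : Fin (nM + 1)), j) ∉ U :=
        fun h => hb ⟨h0, h⟩
      have h2 : acc ω ⟨(i : ℕ) - 1, by have := i.isLt; omega⟩ j = 0 := by
        by_contra h2
        exact hnot (hclosed _ _ ha ⟨hsub _ ha, h2, Or.inl ⟨rfl, Or.inr (by simp; omega)⟩⟩)
      rw [dif_pos h0, h1, h2, add_zero]
    · rw [dif_neg h0, h1, add_zero]
  · obtain ⟨h0, hb⟩ := hb
    have h2 : acc ω ⟨(i : ℕ) - 1, by have := i.isLt; omega⟩ j = 1 := zmod2_eq_one (hsub _ hb)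
    have h1 : acc ω i j = 0 := by
      by_contra h1
      exact ha (hclosed _ _ hb ⟨hsub _ hb, h1, Or.inl ⟨rfl, Or.inl (by simp; omega)⟩⟩)
    rw [dif_pos h0, h1, h2, zero_add]

end Aux2

section Aux3

variable {nM nD : ℕ}

/-- A subtype of a sum splits as a sum of subtypes. -/
def sumSubtypeEquiv {α β : Type*} (p : α ⊕ β → Prop) :
    {v : α ⊕ β // p v} ≃ {a // p (Sum.inl a)} ⊕ {b // p (Sum.inr b)} where
  toFun := fun x => match x with
    | ⟨Sum.inl a, h⟩ => Sum.inl ⟨a, h⟩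
    | ⟨Sum.inr b, h⟩ => Sum.inr ⟨b, h⟩
  invFun := fun x => match x with
    | Sum.inl ⟨a, h⟩ => ⟨Sum.inl a, h⟩
    | Sum.inr ⟨b, h⟩ => ⟨Sum.inr b, h⟩
  left_inv := by rintro ⟨(a | b), h⟩ <;> rfl
  right_inv := by rintro (⟨a, h⟩ | ⟨b, h⟩) <;> rfl

lemma hammingNorm_eq_card {ι : Type*} [Fintype ι] (f : ι → ZMod 2) :
    hammingNorm f = Nat.card {x // f x ≠ 0} := by
  classical
  rw [Nat.card_eq_fintype_card, Fintype.card_subtype]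
  unfold hammingNorm
  congr 1

lemma wtErr_eq_card (ε : CircErr nM nD) :
    wtErr ε = Nat.card {v : Vtx nM nD //
      v.elim (fun p => ε.e p.1 p.2 ≠ 0) (fun k => ε.f k ≠ 0)} := by
  classical
  rw [Nat.card_congr (sumSubtypeEquiv _), Nat.card_eq_fintype_card, Fintype.card_sum]
  unfold wtErr
  congr 1
  · rw [Fintype.card_congr (Equiv.subtypeEquivRight
      (p := fun a : Fin (nM + 1) × Fin nD =>
        Sum.elim (fun q => ε.e q.1 q.2 ≠ 0) (fun k => ε.f k ≠ 0) (Sum.inl a))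
      (q := fun a : Fin (nM + 1) × Fin nD => ε.e a.1 a.2 ≠ 0) fun a => Iff.rfl)]
    rw [Fintype.card_congr
      (Equiv.subtypeProdEquivSigmaSubtype (fun a : Fin (nM + 1) => fun b : Fin nD => ε.e a b ≠ 0)),
      Fintype.card_sigma]
    refine Finset.sum_congr rfl fun a _ => ?_
    rw [hammingNorm_eq_card, Nat.card_eq_fintype_card]
  · rw [Fintype.card_congr (Equiv.subtypeEquivRight
      (p := fun b : Fin nM =>
        Sum.elim (fun pr : Fin (nM + 1) × Fin nD => ε.e pr.1 pr.2 ≠ 0) (fun k => ε.f k ≠ 0) (Sum.inr b))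
      (q := fun k : Fin nM => ε.f k ≠ 0) fun a => Iff.rfl)]
    rw [hammingNorm_eq_card, Nat.card_eq_fintype_card]

lemma wtOn_congr (ε₁ ε₂ : CircErr nM nD) (A : Set (Vtx nM nD))
    (h : ∀ i j, Sum.inl (i, j) ∈ A → ε₁.e i j = ε₂.e i j)
    (h' : ∀ k, Sum.inr k ∈ A → ε₁.f k = ε₂.f k) :
    wtOn ε₁ A = wtOn ε₂ A := by
  unfold wtOn
  refine Nat.card_congr (Equiv.subtypeEquivRight ?_)
  rintro (⟨i, j⟩ | k)
  · simp only [Sum.elim_inl]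
    exact ⟨fun ⟨hA, hne⟩ => ⟨hA, by rw [← h i j hA]; exact hne⟩,
      fun ⟨hA, hne⟩ => ⟨hA, by rw [h i j hA]; exact hne⟩⟩
  · simp only [Sum.elim_inr]
    exact ⟨fun ⟨hA, hne⟩ => ⟨hA, by rw [← h' k hA]; exact hne⟩,
      fun ⟨hA, hne⟩ => ⟨hA, by rw [h' k hA]; exact hne⟩⟩

lemma wtOn_add_compl (ε : CircErr nM nD) (A : Set (Vtx nM nD)) :
    wtOn ε A + wtOn ε Aᶜ = wtErr ε := by
  classical
  rw [wtErr_eq_card]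
  unfold wtOn
  set p : Vtx nM nD → Prop :=
    fun v => v.elim (fun q => ε.e q.1 q.2 ≠ 0) (fun k => ε.f k ≠ 0) with hp
  have e1 : {v : Vtx nM nD // v ∈ A ∧ p v} ≃ {x : {v // p v} // (x : Vtx nM nD) ∈ A} :=
    ((Equiv.subtypeSubtypeEquivSubtypeInter p (fun v => v ∈ A)).trans
      (Equiv.subtypeEquivRight fun v => and_comm)).symm
  have e2 : {v : Vtx nM nD // v ∈ Aᶜ ∧ p v} ≃ {x : {v // p v} // ¬ (x : Vtx nM nD) ∈ A} :=
    ((Equiv.subtypeSubtypeEquivSubtypeInter p (fun v => ¬ v ∈ A)).trans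
      (Equiv.subtypeEquivRight fun v => by
        simp only [Set.mem_compl_iff]; exact and_comm)).symm
  rw [Nat.card_congr e1, Nat.card_congr e2, ← Nat.card_sum,
    Nat.card_congr (Equiv.sumCompl _)]

end Aux3
/-- let `ε` be a circuit error with outcome `m`, `ε̂` a minimum
weight circuit error with outcome `m`, and `ω = ε + ε̂`.  Then for every
cluster `ω_i` of the cluster decomposition of `ω` (determined by the connected
component of a vertex `v0` of the accumulated error of `ω`), the restrictions
`ε_i = ε ∩ V(ω_i)` and `ε̂_i = ε̂ ∩ V(ω_i)` satisfy `|ε_i| ≥ |ε̂_i|`. -/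
theorem stmt_13 (nM nD : ℕ) (H : Fin nM → Fin nD → ZMod 2)
    (ε εhat : CircErr nM nD)
    (hout : outcomeErr H εhat = outcomeErr H ε)
    (hmin : ∀ ω' : CircErr nM nD,
        outcomeErr H ω' = outcomeErr H ε → wtErr εhat ≤ wtErr ω')
    (v0 : Vtx nM nD) (hv0 : v0 ∈ accSupp (ε + εhat)) :
    wtOn εhat (clusterVset (cluster H (ε + εhat) v0)) ≤
      wtOn ε (clusterVset (cluster H (ε + εhat) v0)) := by
  classical
  set ω : CircErr nM nD := ε + εhat with hωdef
  set U : Set (Vtx nM nD) := cluster H ω v0 with hUdef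
  have hsub : ∀ v ∈ U, v ∈ accSupp ω := by
    intro v hv
    obtain ⟨h1, _⟩ := hv
    exact h1
  have hclosed : ∀ u v, u ∈ U → Step H ω u v → v ∈ U := by
    intro u v hu hs
    obtain ⟨h1, h2⟩ := hu
    exact ⟨hs.2.1, h2.tail hs⟩
  have hself : ∀ x : ZMod 2, x + x = 0 := by decide
  have hzmod : ∀ x y : ZMod 2, x + y = 1 → y + 1 = x := by decide
  have hωout : outcomeErr H ω = 0 := by
    funext i
    have h := outcome_add H ε εhat i
    rw [congrFun hout i] at h
    show outcomeErr H (ε + εhat) i = 0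
    rw [h]
    exact hself _
  set V : Set (Vtx nM nD) := clusterVset U with hVdef
  set ε' : CircErr nM nD := εhat + restErr U with hε'def
  have hrest0 : outcomeErr H (restErr U) = 0 :=
    outcome_restErr_zero H ω U hsub hclosed hωout
  have hout' : outcomeErr H ε' = outcomeErr H ε := by
    funext i
    have h := outcome_add H εhat (restErr U) i
    rw [congrFun hrest0 i] at h
    show outcomeErr H (εhat + restErr U) i = outcomeErr H ε i
    rw [h, Pi.zero_apply, add_zero]
    exact congrFun hout i
  have hagree_e : ∀ i j, Sum.inl (i, j) ∈ V → ε'.e i j = ε.e i j := by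
    intro i j hm
    have h1 : ω.e i j = 1 := clusterVset_e_one H ω U hsub hclosed i j hm
    have h2 : (restErr U).e i j = 1 := by
      show (if Sum.inl (i, j) ∈ clusterVset U then (1 : ZMod 2) else 0) = 1
      rw [if_pos hm]
    show εhat.e i j + (restErr U).e i j = ε.e i j
    rw [h2]
    exact hzmod _ _ h1
  have hagree_f : ∀ k, Sum.inr k ∈ V → ε'.f k = ε.f k := by
    intro k hm
    have hmU : Sum.inr k ∈ U := hm
    have h1 : ω.f k = 1 := zmod2_eq_one (hsub _ hmU)
    have h2 : (restErr U).f k = 1 := by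
      show (if Sum.inr k ∈ U then (1 : ZMod 2) else 0) = 1
      rw [if_pos hmU]
    show εhat.f k + (restErr U).f k = ε.f k
    rw [h2]
    exact hzmod _ _ h1
  have hoff_e : ∀ i j, Sum.inl (i, j) ∈ Vᶜ → ε'.e i j = εhat.e i j := by
    intro i j hm
    have h2 : (restErr U).e i j = 0 := by
      show (if Sum.inl (i, j) ∈ clusterVset U then (1 : ZMod 2) else 0) = 0
      rw [if_neg hm]
    show εhat.e i j + (restErr U).e i j = εhat.e i j
    rw [h2, add_zero]
  have hoff_f : ∀ k, Sum.inr k ∈ Vᶜ → ε'.f k = εhat.f k := by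
    intro k hm
    have hmU : Sum.inr k ∉ U := hm
    have h2 : (restErr U).f k = 0 := by
      show (if Sum.inr k ∈ U then (1 : ZMod 2) else 0) = 0
      rw [if_neg hmU]
    show εhat.f k + (restErr U).f k = εhat.f k
    rw [h2, add_zero]
  have w1 := wtOn_add_compl εhat V
  have w2 := wtOn_add_compl ε' V
  have w3 : wtOn ε' V = wtOn ε V := wtOn_congr _ _ _ hagree_e hagree_f
  have w4 : wtOn ε' Vᶜ = wtOn εhat Vᶜ := wtOn_congr _ _ _ hoff_e hoff_f
  have hm' : wtErr εhat ≤ wtErr ε' := hmin ε' hout'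
  omega
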